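/- Let G be a graph and s a non-negative integer with 2s+1 strictly less than the odd girth of G. Then there exists a homomorphism from S_{2s+1}(G^{2s+1}) to G. -/

import Mathlib

structure SGraph where
  V : Type
  Adj : V → V → Prop
  symm : ∀ u v, Adj u v → Adj v u

namespace SGraph

/-- There is a walk of length exactly `n` from `u` to `v`. -/
def walkLen (G : SGraph) : ℕ → G.V → G.V → Prop
  | 0, u, v => u = v
  | n+1, u, v => ∃ w, G.Adj u w ∧ G.walkLen n w v

theorem walkLen_concat (G : SGraph) : ∀ (n : ℕ) (u v w : G.V),
    G.walkLen n u v → G.Adj v w → G.walkLen (n+1) u w := by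
  intro n
  induction n with
  | zero =>
      intro u v w h hadj
      cases h
      exact ⟨w, hadj, rfl⟩
  | succ n ih =>
      rintro u v w ⟨x, hux, hxv⟩ hadj
      exact ⟨x, hux, ih x v w hxv hadj⟩

theorem walkLen_symm (G : SGraph) : ∀ (n : ℕ) (u v : G.V),
    G.walkLen n u v → G.walkLen n v u := by
  intro n
  induction n with
  | zero => intro u v h; exact h.symm
  | succ n ih =>
      rintro u v ⟨w, huw, hwv⟩
      exact G.walkLen_concat n v w u (ih w v hwv) (G.symm u w huw)

/-- The `k`-th power of a graph: same vertices, adjacency = existence of a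
walk of length exactly `k` (loops allowed). -/
def pow (G : SGraph) (k : ℕ) : SGraph where
  V := G.V
  Adj u v := G.walkLen k u v
  symm := G.walkLen_symm k

/-- Existence of a graph homomorphism. -/
def homTo (G H : SGraph) : Prop :=
  ∃ f : G.V → H.V, ∀ u v, G.Adj u v → H.Adj (f u) (f v)

/-- The `(2s+1)`-subdivision `S_{2s+1}(G)`: every edge is replaced by a path
of length `2s+1`.  Following the paper's notation, the ordered pair `(u,v)`
(with `u ~ v`) carries the `s` inner vertices `(uv)_1, …, (uv)_s`. -/
def subdiv (G : SGraph) (s : ℕ) : SGraph where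
  V := G.V ⊕ ({p : G.V × G.V // G.Adj p.1 p.2} × Fin s)
  Adj x y :=
    match x, y with
    | Sum.inl u, Sum.inl v => s = 0 ∧ G.Adj u v
    | Sum.inl u, Sum.inr (e, k) => u = e.1.2 ∧ (k : ℕ) = s - 1
    | Sum.inr (e, k), Sum.inl u => u = e.1.2 ∧ (k : ℕ) = s - 1
    | Sum.inr (e, k), Sum.inr (e', l) =>
        e'.1.1 = e.1.2 ∧ e'.1.2 = e.1.1 ∧
        ((k : ℕ) + (l : ℕ) + 2 = s ∨ (k : ℕ) + (l : ℕ) + 2 = s + 1)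
  symm := by
    rintro (u | ⟨e, k⟩) (v | ⟨e', l⟩) h
    · exact ⟨h.1, G.symm _ _ h.2⟩
    · exact h
    · exact h
    · obtain ⟨h1, h2, h3⟩ := h
      exact ⟨h2.symm, h1.symm, by omega⟩

/-- `q < og(G)`: the rational `q` is smaller than the odd girth of `G`
(the length of a shortest odd closed walk; vacuously true if `G` is bipartite). -/
def ltOddGirth (G : SGraph) (q : ℚ) : Prop :=
  ∀ n : ℕ, Odd n → (∃ v, G.walkLen n v v) → q < (n : ℚ)

/-- A graph is non-bipartite iff it contains an odd closed walk. -/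
def Nonbipartite (G : SGraph) : Prop :=
  ∃ (n : ℕ) (v : G.V), Odd n ∧ G.walkLen n v v

/-- The odd girth, as an extended natural number (`⊤` for bipartite graphs). -/
noncomputable def oddGirth (G : SGraph) : ℕ∞ :=
  sInf {N : ℕ∞ | ∃ n : ℕ, N = (n : ℕ∞) ∧ Odd n ∧ ∃ v, G.walkLen n v v}

/-- The complete graph on `m` vertices. -/
def completeGraph (m : ℕ) : SGraph :=
  ⟨Fin m, fun u v => u ≠ v, fun _ _ h => h.symm⟩

/-- The chromatic number: least `m` such that `G` maps homomorphically to `K_m`. -/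
noncomputable def chromatic (G : SGraph) : ℕ :=
  sInf {m : ℕ | G.homTo (completeGraph m)}

/-- The `i`-th power thickness
`θ_i(G) = sup { (2r+1)/(2s+1) | χ(G^{(2r+1)/(2s+1)}) ≤ χ(G)+i, (2r+1)/(2s+1) < og(G) }`. -/
noncomputable def powerThickness (G : SGraph) (i : ℤ) : ℝ :=
  sSup {x : ℝ | ∃ r s : ℕ, x = (2*(r:ℝ)+1)/(2*(s:ℝ)+1) ∧
    ((((G.subdiv s).pow (2*r+1)).chromatic : ℤ) ≤ (G.chromatic : ℤ) + i) ∧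
    G.ltOddGirth ((2*(r:ℚ)+1)/(2*(s:ℚ)+1))}

/-- The graph `H^{-1/(2r+1)}`. -/
def negPow (H : SGraph) (r : ℕ) : SGraph where
  V := {A : Fin (r+1) → Set H.V //
        (∃ v, A 0 = {v}) ∧
        ∀ i : Fin (r+1), (A i).Nonempty ∧ A i ⊆ {u | ∃ v ∈ A 0, H.walkLen i v u}}
  Adj A B :=
    (∀ i j : Fin (r+1), (j : ℕ) = (i : ℕ) + 1 → A.1 i ⊆ B.1 j ∧ B.1 i ⊆ A.1 j) ∧
    ∀ j : Fin (r+1), ∀ a ∈ A.1 j, ∀ b ∈ B.1 j, H.Adj a b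
  symm := by
    rintro A B ⟨h1, h2⟩
    exact ⟨fun i j hij => ⟨(h1 i j hij).2, (h1 i j hij).1⟩,
           fun j b hb a ha => H.symm _ _ (h2 j a ha b hb)⟩

/-- The circular complete graph `K_{n/d}`. -/
def circGraph (n d : ℕ) : SGraph where
  V := Fin n
  Adj u v := (d : ℤ) ≤ |(u : ℤ) - (v : ℤ)| ∧ |(u : ℤ) - (v : ℤ)| ≤ (n : ℤ) - d
  symm := by
    intro u v h
    rwa [abs_sub_comm]

/-- The circular chromatic number, as a real number. -/
noncomputable def circChrom (G : SGraph) : ℝ :=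
  sInf {x : ℝ | ∃ n d : ℕ, 0 < d ∧ 2 * d ≤ n ∧ Nat.gcd n d = 1 ∧
    x = (n : ℝ) / (d : ℝ) ∧ G.homTo (circGraph n d)}

/-- The cycle on `m` vertices. -/
def cycleGraph (m : ℕ) : SGraph :=
  ⟨ZMod m, fun i j => i = j + 1 ∨ j = i + 1, fun _ _ h => h.symm⟩

/-- Graph isomorphism. -/
def Isom (G H : SGraph) : Prop :=
  ∃ f : G.V ≃ H.V, ∀ u v, G.Adj u v ↔ H.Adj (f u) (f v)

/-- The helical graph `H(m,n,k)`. -/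
def helical (m n k : ℕ) : SGraph where
  V := {A : Fin k → Set (Fin m) //
        (∀ h : 0 < k, (A ⟨0, h⟩).ncard = n) ∧
        (∀ i, n ≤ (A i).ncard) ∧
        (∀ i : Fin k, ∀ h : (i : ℕ) + 1 < k, A i ∩ A ⟨(i : ℕ) + 1, h⟩ = ∅) ∧
        (∀ i : Fin k, ∀ h : (i : ℕ) + 2 < k, A i ⊆ A ⟨(i : ℕ) + 2, h⟩)}
  Adj A B :=
    (∀ i, A.1 i ∩ B.1 i = ∅) ∧
    (∀ i : Fin k, ∀ h : (i : ℕ) + 1 < k,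
      A.1 i ⊆ B.1 ⟨(i : ℕ) + 1, h⟩ ∧ B.1 i ⊆ A.1 ⟨(i : ℕ) + 1, h⟩)
  symm := by
    rintro A B ⟨h1, h2⟩
    refine ⟨fun i => ?_, fun i h => ⟨(h2 i h).2, (h2 i h).1⟩⟩
    rw [Set.inter_comm]
    exact h1 i

/-- A graph with chromatic number `k` is colorful if every proper `k`-coloring
admits a (nonempty) induced subgraph all of whose vertices see all `k` colors in
their closed neighborhood. -/
def Colorful (G : SGraph) : Prop :=
  ∀ c : G.V → Fin G.chromatic, (∀ u v, G.Adj u v → c u ≠ c v) →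
    ∃ S : Set G.V, S.Nonempty ∧
      ∀ v ∈ S, ∀ col : Fin G.chromatic,
        ∃ u ∈ S, (u = v ∨ G.Adj v u) ∧ c u = col

end SGraph


theorem SGraph.exists_path (G : SGraph) : ∀ (n : ℕ) (u v : G.V), G.walkLen n u v →
    ∃ p : ℕ → G.V, p 0 = u ∧ p n = v ∧ ∀ i, i < n → G.Adj (p i) (p (i+1)) := by
  intro n
  induction n with
  | zero => intro u v h; exact ⟨fun _ => u, rfl, h.symm ▸ rfl, by omega⟩
  | succ n ih =>
      rintro u v ⟨w, huw, hwv⟩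
      obtain ⟨p, hp0, hpn, hadj⟩ := ih w v hwv
      refine ⟨fun i => match i with | 0 => u | j+1 => p j, rfl, hpn, ?_⟩
      rintro (_|i) hi
      · simpa [hp0] using huw
      · exact hadj i (by omega)

noncomputable def SGraph.pathOf (G : SGraph) (n : ℕ) (u v : G.V) (hw : G.walkLen n u v) :
    ℕ → G.V :=
  Classical.choose (G.exists_path n u v hw)

theorem SGraph.pathOf_spec (G : SGraph) (n : ℕ) (u v : G.V) (hw : G.walkLen n u v) :
    G.pathOf n u v hw 0 = u ∧ G.pathOf n u v hw n = v ∧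
    ∀ i, i < n → G.Adj (G.pathOf n u v hw i) (G.pathOf n u v hw (i+1)) :=
  Classical.choose_spec (G.exists_path n u v hw)

open SGraph

/-- If `2s+1 < og(G)` then `S_{2s+1}(G^{2s+1}) → G`. -/
theorem pow_subdiv_hom (G : SGraph) (s : ℕ) (h : G.ltOddGirth (2 * (s : ℚ) + 1)) :
    ((G.pow (2 * s + 1)).subdiv s).homTo G := by
  classical
  letI : LinearOrder ((G.pow (2*s+1)).V) := IsWellOrder.linearOrder WellOrderingRel
  have hne : ∀ u : G.V, ¬ G.walkLen (2*s+1) u u := by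
    intro u hu
    have := h (2*s+1) ⟨s, by ring⟩ ⟨u, hu⟩
    push_cast at this; linarith
  refine ⟨Sum.elim (fun u => u) (fun ek =>
      if ek.1.1.1 ≤ ek.1.1.2 then
        G.pathOf (2*s+1) ek.1.1.1 ek.1.1.2 ek.1.2 (2*(ek.2:ℕ)+2)
      else
        G.pathOf (2*s+1) ek.1.1.2 ek.1.1.1 (G.walkLen_symm _ _ _ ek.1.2)
          (2*s-2*(ek.2:ℕ)-1)), ?_⟩
  intro x y hadj
  rcases x with u | ⟨⟨⟨u,v⟩,he⟩,k⟩ <;> rcases y with w | ⟨⟨⟨u',v'⟩,he'⟩,l⟩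
  · -- inl-inl
    obtain ⟨hs, hw⟩ := hadj
    have hw' : G.walkLen (2*s+1) u w := hw
    rw [hs] at hw'
    obtain ⟨x, hx, hx2⟩ := hw'
    have : x = w := hx2
    subst this
    exact hx
  · -- inl-inr
    obtain ⟨h1, hl⟩ := hadj
    have h1' : u = v' := h1
    subst h1'
    have hl' : (l : ℕ) = s - 1 := hl
    have hls : (l : ℕ) < s := l.isLt
    show G.Adj u (if u' ≤ u then G.pathOf (2*s+1) u' u he' (2*(l:ℕ)+2)
      else G.pathOf (2*s+1) u u' (G.walkLen_symm _ _ _ he') (2*s-2*(l:ℕ)-1))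
    split_ifs with hle
    · obtain ⟨hp0, hpn, hpa⟩ := G.pathOf_spec (2*s+1) u' u he'
      rw [show 2*(l:ℕ)+2 = 2*s by omega]
      have := hpa (2*s) (by omega)
      rw [hpn] at this
      exact G.symm _ _ this
    · obtain ⟨hp0, hpn, hpa⟩ := G.pathOf_spec (2*s+1) u u' (G.walkLen_symm _ u' u he')
      rw [show 2*s-2*(l:ℕ)-1 = 1 by omega]
      have := hpa 0 (by omega)
      rwa [hp0] at this
  · -- inr-inl
    obtain ⟨h1, hk⟩ := hadj
    have h1' : w = v := h1
    subst h1'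
    have hk' : (k : ℕ) = s - 1 := hk
    have hks : (k : ℕ) < s := k.isLt
    show G.Adj (if u ≤ w then G.pathOf (2*s+1) u w he (2*(k:ℕ)+2)
      else G.pathOf (2*s+1) w u (G.walkLen_symm _ _ _ he) (2*s-2*(k:ℕ)-1)) w
    split_ifs with hle
    · obtain ⟨hp0, hpn, hpa⟩ := G.pathOf_spec (2*s+1) u w he
      rw [show 2*(k:ℕ)+2 = 2*s by omega]
      have := hpa (2*s) (by omega)
      rwa [hpn] at this
    · obtain ⟨hp0, hpn, hpa⟩ := G.pathOf_spec (2*s+1) w u (G.walkLen_symm _ u w he)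
      rw [show 2*s-2*(k:ℕ)-1 = 1 by omega]
      have := hpa 0 (by omega)
      rw [hp0] at this
      exact G.symm _ _ this
  · -- inr-inr
    obtain ⟨h1, h2, hkl⟩ := hadj
    have h1' : u' = v := h1
    have h2' : v' = u := h2
    subst h1'; subst h2'
    -- now the edge e is (v', u') and e' is (u', v'); he : walkLen (2s+1) v' u'
    have he2 : G.walkLen (2*s+1) v' u' := he
    have hkl' : (k:ℕ) + (l:ℕ) + 2 = s ∨ (k:ℕ) + (l:ℕ) + 2 = s + 1 := hkl
    have huv : v' ≠ u' := by
      intro hcontra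
      exact hne v' (by rw [hcontra] at he2; exact hcontra ▸ he2)
    have hks : (k : ℕ) < s := k.isLt
    have hls : (l : ℕ) < s := l.isLt
    show G.Adj
      (if v' ≤ u' then G.pathOf (2*s+1) v' u' he (2*(k:ℕ)+2)
        else G.pathOf (2*s+1) u' v' (G.walkLen_symm _ _ _ he) (2*s-2*(k:ℕ)-1))
      (if u' ≤ v' then G.pathOf (2*s+1) u' v' he' (2*(l:ℕ)+2)
        else G.pathOf (2*s+1) v' u' (G.walkLen_symm _ _ _ he') (2*s-2*(l:ℕ)-1))
    rcases le_or_gt v' u' with hle | hlt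
    · have hnle : ¬ (u' ≤ v') := fun hc => huv (le_antisymm hle hc)
      rw [if_pos hle, if_neg hnle]
      obtain ⟨hp0, hpn, hpa⟩ := G.pathOf_spec (2*s+1) v' u' he
      rcases hkl' with hkl' | hkl'
      · rw [show 2*s-2*(l:ℕ)-1 = 2*(k:ℕ)+2+1 by omega]
        exact hpa (2*(k:ℕ)+2) (by omega)
      · rw [show 2*s-2*(l:ℕ)-1 = 2*(k:ℕ)+1 by omega,
          show 2*(k:ℕ)+2 = 2*(k:ℕ)+1+1 from rfl]
        exact G.symm _ _ (hpa (2*(k:ℕ)+1) (by omega))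
    · have hnle : ¬ (v' ≤ u') := not_le.mpr hlt
      rw [if_neg hnle, if_pos hlt.le]
      obtain ⟨hp0, hpn, hpa⟩ := G.pathOf_spec (2*s+1) u' v' (G.walkLen_symm _ v' u' he)
      rcases hkl' with hkl' | hkl'
      · rw [show 2*s-2*(k:ℕ)-1 = 2*(l:ℕ)+2+1 by omega]
        exact G.symm _ _ (hpa (2*(l:ℕ)+2) (by omega))
      · rw [show 2*s-2*(k:ℕ)-1 = 2*(l:ℕ)+1 by omega,
          show 2*(l:ℕ)+2 = 2*(l:ℕ)+1+1 from rfl]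
        exact hpa (2*(l:ℕ)+1) (by omega)
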